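/- Two ¬-free nested programs are strongly equivalent if and only if they have the same positive SE-models, i.e., the same SE-models (X,Y) in which X and Y consist only of atoms. -/
import Mathlib


open scoped Classical

inductive Lit where
  | pos : ℕ → Lit
  | neg : ℕ → Lit
deriving DecidableEq

inductive Fml where
  | bot : Fml
  | top : Fml
  | lit : Lit → Fml
  | not : Fml → Fml
  | conj : Fml → Fml → Fml
  | disj : Fml → Fml → Fml
deriving DecidableEq

structure Rule where
  head : Fml
  body : Fml
deriving DecidableEq

abbrev Prog := Set Rule

/-- A set of literals is consistent if it contains no complementary pair. -/
def Consistent (X : Set Lit) : Prop :=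
  ∀ a : ℕ, ¬ (Lit.pos a ∈ X ∧ Lit.neg a ∈ X)

def Sat (X : Set Lit) : Fml → Prop
  | Fml.bot => False
  | Fml.top => True
  | Fml.lit l => l ∈ X
  | Fml.not F => ¬ Sat X F
  | Fml.conj F G => Sat X F ∧ Sat X G
  | Fml.disj F G => Sat X F ∨ Sat X G

def SatRule (X : Set Lit) (r : Rule) : Prop := Sat X r.body → Sat X r.head

def SatProg (X : Set Lit) (P : Prog) : Prop := ∀ r ∈ P, SatRule X r

/-- The reduct of a formula relative to X. -/
noncomputable def Reduct (X : Set Lit) : Fml → Fml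
  | Fml.bot => Fml.bot
  | Fml.top => Fml.top
  | Fml.lit l => Fml.lit l
  | Fml.not F => if Sat X F then Fml.bot else Fml.top
  | Fml.conj F G => Fml.conj (Reduct X F) (Reduct X G)
  | Fml.disj F G => Fml.disj (Reduct X F) (Reduct X G)

noncomputable def ReductRule (X : Set Lit) (r : Rule) : Rule :=
  ⟨Reduct X r.head, Reduct X r.body⟩

noncomputable def ReductProg (X : Set Lit) (P : Prog) : Prog :=
  ReductRule X '' P

/-- Y is an answer set for P: Y is minimal among consistent sets satisfying the reduct of P w.r.t. Y. -/
def AnswerSet (Y : Set Lit) (P : Prog) : Prop :=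
  Consistent Y ∧ SatProg Y (ReductProg Y P) ∧
    ∀ Z : Set Lit, Consistent Z → SatProg Z (ReductProg Y P) → Z ⊆ Y → Z = Y

def SEModel (P : Prog) (X Y : Set Lit) : Prop :=
  Consistent X ∧ Consistent Y ∧ X ⊆ Y ∧ SatProg Y P ∧ SatProg X (ReductProg Y P)

def StrongEq (P Q : Prog) : Prop :=
  ∀ R : Prog, ∀ Y : Set Lit, AnswerSet Y (P ∪ R) ↔ AnswerSet Y (Q ∪ R)

def Fml.negFree : Fml → Prop
  | Fml.bot => True
  | Fml.top => True
  | Fml.lit l => ∃ a, l = Lit.pos a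
  | Fml.not F => F.negFree
  | Fml.conj F G => F.negFree ∧ G.negFree
  | Fml.disj F G => F.negFree ∧ G.negFree

def ProgNegFree (P : Prog) : Prop := ∀ r ∈ P, r.head.negFree ∧ r.body.negFree

/-- The set of atoms (positive literals) in a set of literals. -/
def PosLits (Z : Set Lit) : Set Lit := {l ∈ Z | ∃ a, l = Lit.pos a}

def AtomsOnly (Z : Set Lit) : Prop := ∀ l ∈ Z, ∃ a, l = Lit.pos a

/- ### Auxiliary lemmas ### -/

lemma sat_reduct_self (Y : Set Lit) : ∀ F, Sat Y (Reduct Y F) ↔ Sat Y F := by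
  intro F
  induction F with
  | bot => simp [Sat, Reduct]
  | top => simp [Sat, Reduct]
  | lit l => simp [Sat, Reduct]
  | not F ih => by_cases h : Sat Y F <;> simp [Sat, Reduct, h]
  | conj F G ihF ihG => simp [Sat, Reduct, ihF, ihG]
  | disj F G ihF ihG => simp [Sat, Reduct, ihF, ihG]

lemma satProg_reduct_self (Y : Set Lit) (P : Prog) :
    SatProg Y (ReductProg Y P) ↔ SatProg Y P := by
  constructor
  · intro h r hr hb
    have hb' : Sat Y (Reduct Y r.body) := (sat_reduct_self Y r.body).2 hb
    have := h (ReductRule Y r) ⟨r, hr, rfl⟩ hb'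
    exact (sat_reduct_self Y r.head).1 this
  · rintro h r ⟨s, hs, rfl⟩ hb
    exact (sat_reduct_self Y s.head).2 (h s hs ((sat_reduct_self Y s.body).1 hb))

lemma reductProg_union (Y : Set Lit) (P R : Prog) :
    ReductProg Y (P ∪ R) = ReductProg Y P ∪ ReductProg Y R :=
  Set.image_union _ _ _

lemma satProg_union {Y : Set Lit} {P R : Prog} :
    SatProg Y (P ∪ R) ↔ SatProg Y P ∧ SatProg Y R := by
  constructor
  · intro h
    exact ⟨fun r hr => h r (Or.inl hr), fun r hr => h r (Or.inr hr)⟩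
  · rintro ⟨h1, h2⟩ r (hr | hr)
    · exact h1 r hr
    · exact h2 r hr

lemma reductProg_eq_self {Y : Set Lit} {R : Prog}
    (h : ∀ r ∈ R, ReductRule Y r = r) : ReductProg Y R = R := by
  unfold ReductProg
  rw [Set.image_congr h]
  exact Set.image_id' R

/-- Facts: rules `l ← ⊤` for each `l ∈ X`. -/
def Facts (X : Set Lit) : Prog := {r | ∃ l ∈ X, r = ⟨Fml.lit l, Fml.top⟩}

/-- Pairs: rules `p ← q` for `p, q ∈ Y \ X`. -/
def Pairs (X Y : Set Lit) : Prog :=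
  {r | ∃ p ∈ Y, p ∉ X ∧ ∃ q ∈ Y, q ∉ X ∧ r = ⟨Fml.lit p, Fml.lit q⟩}

lemma reduct_facts (Y X : Set Lit) : ReductProg Y (Facts X) = Facts X := by
  apply reductProg_eq_self
  rintro r ⟨l, _, rfl⟩
  simp [ReductRule, Reduct]

lemma reduct_pairs (Z X Y : Set Lit) : ReductProg Z (Pairs X Y) = Pairs X Y := by
  apply reductProg_eq_self
  rintro r ⟨p, _, _, q, _, _, rfl⟩
  simp [ReductRule, Reduct]

lemma sat_facts {Z X : Set Lit} (h : X ⊆ Z) : SatProg Z (Facts X) := by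
  rintro r ⟨l, hl, rfl⟩ _
  exact h hl

lemma mem_of_sat_facts {Z X : Set Lit} (h : SatProg Z (Facts X)) : X ⊆ Z := by
  intro l hl
  have := h ⟨Fml.lit l, Fml.top⟩ ⟨l, hl, rfl⟩
  exact this trivial

lemma sat_pairs_of_subset {Z X Y : Set Lit} (h : Y ⊆ Z) : SatProg Z (Pairs X Y) := by
  rintro r ⟨p, hp, _, q, _, _, rfl⟩ _
  exact h hp

lemma sat_pairs_of_disj {X Y : Set Lit} : SatProg X (Pairs X Y) := by
  rintro r ⟨p, _, _, q, _, hq, rfl⟩ hb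
  exact absurd hb hq

/-- Key lemma (one direction of the SE theorem): strong equivalence transfers SE-models. -/
lemma se_of_strongEq {P Q : Prog} (h : StrongEq P Q) {X Y : Set Lit}
    (hse : SEModel P X Y) : SEModel Q X Y := by
  obtain ⟨hcX, hcY, hXY, hYP, hXred⟩ := hse
  -- Step A: Y satisfies Q
  have hYQ : SatProg Y Q := by
    have hA : AnswerSet Y (P ∪ Facts Y) := by
      refine ⟨hcY, ?_, ?_⟩
      · rw [satProg_reduct_self]
        exact satProg_union.2 ⟨hYP, sat_facts subset_rfl⟩
      · intro Z _ hZsat hZY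
        rw [reductProg_union, reduct_facts] at hZsat
        have hYZ : Y ⊆ Z := mem_of_sat_facts (satProg_union.1 hZsat).2
        exact Set.Subset.antisymm hZY hYZ
    have hB : AnswerSet Y (Q ∪ Facts Y) := (h (Facts Y) Y).1 hA
    have := (satProg_reduct_self Y _).1 hB.2.1
    exact (satProg_union.1 this).1
  -- Step B: X satisfies the reduct of Q w.r.t. Y
  have hXredQ : SatProg X (ReductProg Y Q) := by
    by_contra hnot
    have hXneY : X ≠ Y := by
      rintro rfl
      exact hnot ((satProg_reduct_self X Q).2 hYQ)
    set R : Prog := Facts X ∪ Pairs X Y with hR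
    have hRred : ReductProg Y R = R := by
      rw [hR, reductProg_union, reduct_facts, reduct_pairs]
    have hAQ : AnswerSet Y (Q ∪ R) := by
      refine ⟨hcY, ?_, ?_⟩
      · rw [satProg_reduct_self]
        exact satProg_union.2 ⟨hYQ, satProg_union.2
          ⟨sat_facts hXY, sat_pairs_of_subset subset_rfl⟩⟩
      · intro Z hcZ hZsat hZY
        rw [reductProg_union, hRred] at hZsat
        obtain ⟨hZQ, hZR⟩ := satProg_union.1 hZsat
        obtain ⟨hZF, hZP2⟩ := satProg_union.1 hZR
        have hXZ : X ⊆ Z := mem_of_sat_facts hZF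
        by_contra hZneY
        obtain ⟨m, hmY, hmZ⟩ : ∃ m, m ∈ Y ∧ m ∉ Z := by
          by_contra hc
          push_neg at hc
          exact hZneY (Set.Subset.antisymm hZY hc)
        have hZneX : Z ≠ X := by
          rintro rfl
          exact hnot hZQ
        obtain ⟨q, hqZ, hqX⟩ : ∃ q, q ∈ Z ∧ q ∉ X := by
          by_contra hc
          push_neg at hc
          exact hZneX (Set.Subset.antisymm hc hXZ)
        have hmX : m ∉ X := fun hm => hmZ (hXZ hm)
        have : m ∈ Z :=
          hZP2 ⟨Fml.lit m, Fml.lit q⟩ ⟨m, hmY, hmX, q, hZY hqZ, hqX, rfl⟩ hqZ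
        exact hmZ this
    have hAP : AnswerSet Y (P ∪ R) := (h R Y).2 hAQ
    have hXsat : SatProg X (ReductProg Y (P ∪ R)) := by
      rw [reductProg_union, hRred]
      exact satProg_union.2 ⟨hXred, satProg_union.2
        ⟨sat_facts subset_rfl, sat_pairs_of_disj⟩⟩
    exact hXneY (hAP.2.2 X hcX hXsat hXY)
  exact ⟨hcX, hcY, hXY, hYQ, hXredQ⟩

lemma answerSet_imp {P Q : Prog}
    (h : ∀ X Y : Set Lit, SEModel P X Y ↔ SEModel Q X Y)
    (R : Prog) (Y : Set Lit) (hA : AnswerSet Y (P ∪ R)) : AnswerSet Y (Q ∪ R) := by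
  obtain ⟨hc, hsat, hmin⟩ := hA
  have hsat' := (satProg_reduct_self Y _).1 hsat
  obtain ⟨hYP, hYR⟩ := satProg_union.1 hsat'
  have hseP : SEModel P Y Y :=
    ⟨hc, hc, subset_rfl, hYP, (satProg_reduct_self Y P).2 hYP⟩
  have hseQ : SEModel Q Y Y := (h Y Y).1 hseP
  refine ⟨hc, ?_, ?_⟩
  · rw [satProg_reduct_self]
    exact satProg_union.2 ⟨hseQ.2.2.2.1, hYR⟩
  · intro Z hcZ hZsat hZY
    rw [reductProg_union] at hZsat
    obtain ⟨hZQ, hZR⟩ := satProg_union.1 hZsat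
    have hseZQ : SEModel Q Z Y := ⟨hcZ, hc, hZY, hseQ.2.2.2.1, hZQ⟩
    have hseZP : SEModel P Z Y := (h Z Y).2 hseZQ
    apply hmin Z hcZ _ hZY
    rw [reductProg_union]
    exact satProg_union.2 ⟨hseZP.2.2.2.2, hZR⟩

lemma strongEq_of_se {P Q : Prog}
    (h : ∀ X Y : Set Lit, SEModel P X Y ↔ SEModel Q X Y) : StrongEq P Q := by
  intro R Y
  exact ⟨answerSet_imp h R Y, answerSet_imp (fun X Y => (h X Y).symm) R Y⟩

/- ### Positive SE-models for ¬-free programs ### -/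

lemma posLits_subset (Z : Set Lit) : PosLits Z ⊆ Z := fun _ hl => hl.1

lemma consistent_posLits (Z : Set Lit) : Consistent (PosLits Z) := by
  intro a ⟨_, hn⟩
  obtain ⟨_, b, hb⟩ := hn
  exact Lit.noConfusion hb

lemma atomsOnly_posLits (Z : Set Lit) : AtomsOnly (PosLits Z) := fun _ hl => hl.2

lemma posLits_mono {X Y : Set Lit} (h : X ⊆ Y) : PosLits X ⊆ PosLits Y :=
  fun _ hl => ⟨h hl.1, hl.2⟩

lemma sat_posLits {Z : Set Lit} : ∀ {F : Fml}, F.negFree →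
    (Sat (PosLits Z) F ↔ Sat Z F) := by
  intro F
  induction F with
  | bot => intro _; simp [Sat]
  | top => intro _; simp [Sat]
  | lit l =>
    rintro ⟨a, rfl⟩
    simp only [Sat]
    constructor
    · exact fun h => h.1
    · exact fun h => ⟨h, a, rfl⟩
  | not F ih => intro hF; simp only [Sat]; rw [ih hF]
  | conj F G ihF ihG =>
    rintro ⟨hF, hG⟩
    simp only [Sat]
    rw [ihF hF, ihG hG]
  | disj F G ihF ihG =>
    rintro ⟨hF, hG⟩
    simp only [Sat]
    rw [ihF hF, ihG hG]

lemma reduct_posLits {Z : Set Lit} : ∀ {F : Fml}, F.negFree →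
    Reduct (PosLits Z) F = Reduct Z F := by
  intro F
  induction F with
  | bot => intro _; rfl
  | top => intro _; rfl
  | lit l => intro _; rfl
  | not F ih =>
    intro hF
    have hF' : F.negFree := hF
    simp only [Reduct, sat_posLits hF']
  | conj F G ihF ihG =>
    rintro ⟨hF, hG⟩
    simp only [Reduct]
    rw [ihF hF, ihG hG]
  | disj F G ihF ihG =>
    rintro ⟨hF, hG⟩
    simp only [Reduct]
    rw [ihF hF, ihG hG]

lemma negFree_reduct {Z : Set Lit} : ∀ {F : Fml}, F.negFree →
    (Reduct Z F).negFree := by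
  intro F
  induction F with
  | bot => intro _; trivial
  | top => intro _; trivial
  | lit l => intro h; exact h
  | not F ih =>
    intro _
    simp only [Reduct]
    split <;> trivial
  | conj F G ihF ihG => rintro ⟨hF, hG⟩; exact ⟨ihF hF, ihG hG⟩
  | disj F G ihF ihG => rintro ⟨hF, hG⟩; exact ⟨ihF hF, ihG hG⟩

lemma satProg_posLits {Z : Set Lit} {P : Prog} (hP : ProgNegFree P) :
    SatProg (PosLits Z) P ↔ SatProg Z P := by
  constructor
  · intro h r hr hb
    exact (sat_posLits (hP r hr).1).1
      (h r hr ((sat_posLits (hP r hr).2).2 hb))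
  · intro h r hr hb
    exact (sat_posLits (hP r hr).1).2
      (h r hr ((sat_posLits (hP r hr).2).1 hb))

lemma reductProg_posLits {Y : Set Lit} {P : Prog} (hP : ProgNegFree P) :
    ReductProg (PosLits Y) P = ReductProg Y P := by
  unfold ReductProg
  apply Set.image_congr
  intro r hr
  unfold ReductRule
  rw [reduct_posLits (hP r hr).1, reduct_posLits (hP r hr).2]

lemma progNegFree_reduct {Y : Set Lit} {P : Prog} (hP : ProgNegFree P) :
    ProgNegFree (ReductProg Y P) := by
  rintro r ⟨s, hs, rfl⟩
  exact ⟨negFree_reduct (hP s hs).1, negFree_reduct (hP s hs).2⟩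

lemma seModel_posLits {P : Prog} (hP : ProgNegFree P) {X Y : Set Lit}
    (h : SEModel P X Y) : SEModel P (PosLits X) (PosLits Y) := by
  obtain ⟨_, _, hXY, hYP, hXred⟩ := h
  refine ⟨consistent_posLits X, consistent_posLits Y, posLits_mono hXY,
    (satProg_posLits hP).2 hYP, ?_⟩
  rw [reductProg_posLits hP]
  exact (satProg_posLits (progNegFree_reduct hP)).2 hXred

lemma seModel_of_posLits {P : Prog} (hP : ProgNegFree P) {X Y : Set Lit}
    (hcX : Consistent X) (hcY : Consistent Y) (hXY : X ⊆ Y)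
    (h : SEModel P (PosLits X) (PosLits Y)) : SEModel P X Y := by
  obtain ⟨_, _, _, hYP, hXred⟩ := h
  refine ⟨hcX, hcY, hXY, (satProg_posLits hP).1 hYP, ?_⟩
  rw [reductProg_posLits hP] at hXred
  exact (satProg_posLits (progNegFree_reduct hP)).1 hXred

/-- ¬-free nested programs are strongly equivalent iff they have the
same positive SE-models. -/
theorem stmt7 (P Q : Prog) (hP : ProgNegFree P) (hQ : ProgNegFree Q) :
    StrongEq P Q ↔
      ∀ X Y : Set Lit, AtomsOnly X → AtomsOnly Y →
        (SEModel P X Y ↔ SEModel Q X Y) := by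
  constructor
  · intro h X Y _ _
    exact ⟨se_of_strongEq h, se_of_strongEq (fun R Y => (h R Y).symm)⟩
  · intro h
    apply strongEq_of_se
    intro X Y
    constructor
    · intro hse
      exact seModel_of_posLits hQ hse.1 hse.2.1 hse.2.2.1
        ((h _ _ (atomsOnly_posLits X) (atomsOnly_posLits Y)).1
          (seModel_posLits hP hse))
    · intro hse
      exact seModel_of_posLits hP hse.1 hse.2.1 hse.2.2.1
        ((h _ _ (atomsOnly_posLits X) (atomsOnly_posLits Y)).2
          (seModel_posLits hQ hse))
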